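/- Let H be an N×N real symmetric tridiagonal matrix commuting with the reversal (mirror) permutation matrix S (S e_n = e_{N+1-n}), with all off-diagonal entries J_n nonzero. Suppose every eigenvalue λ of H with symmetric eigenvector (S v = v) satisfies e^{-i t_0 λ} = e^{iφ}, and every eigenvalue with antisymmetric eigenvector (S v = -v) satisfies e^{-i t_0 λ} = -e^{iφ}, for some fixed t_0 and φ. Then exp(-i t_0 H) e_1 = e^{iφ} e_N, i.e., perfect state transfer occurs. -/

import Mathlib

open Matrix

/-- Real symmetric tridiagonal complex matrix: diagonal `B`, off-diagonal `J`. -/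
noncomputable def triC (N : ℕ) (B J : ℕ → ℝ) : Matrix (Fin N) (Fin N) ℂ :=
  Matrix.of fun i j =>
    if (i : ℕ) = j then (B i : ℂ)
    else if (i : ℕ) + 1 = j then (J i : ℂ)
    else if (j : ℕ) + 1 = i then (J j : ℂ)
    else 0

/-- The mirror (order-reversing) permutation matrix `S eₙ = e_{N+1-n}`. -/
def mirrorC (N : ℕ) : Matrix (Fin N) (Fin N) ℂ :=
  Matrix.of fun i j => if j = i.rev then 1 else 0

lemma mirror_mulVec {N : ℕ} (x : Fin N → ℂ) (i : Fin N) :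
    (mirrorC N).mulVec x i = x i.rev := by
  simp [mirrorC, mulVec, dotProduct, ite_mul]

lemma tri_herm {N : ℕ} (B J : ℕ → ℝ) : (triC N B J).IsHermitian := by
  ext i j
  simp only [conjTranspose_apply, triC, Matrix.of_apply]
  by_cases h1 : (i : ℕ) = j
  · have : i = j := Fin.ext h1
    subst this
    simp
  · have h1' : (j : ℕ) ≠ i := fun h => h1 h.symm
    rw [if_neg h1', if_neg h1]
    by_cases h2 : (i : ℕ) + 1 = j
    · have h2' : ¬ ((j : ℕ) + 1 = i) := by omega
      rw [if_neg h2', if_pos h2, if_pos h2]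
      simp
    · rw [if_neg h2, if_neg h2]
      by_cases h3 : (j : ℕ) + 1 = i
      · rw [if_pos h3]; simp
      · rw [if_neg h3]; simp

lemma eig_zero {N : ℕ} (B J : ℕ → ℝ) (hJ : ∀ i, i + 1 < N → J i ≠ 0)
    (μ : ℂ) (v : Fin N → ℂ) (hv : (triC N B J).mulVec v = μ • v)
    (h0 : ∀ h : 0 < N, v ⟨0, h⟩ = 0) : v = 0 := by
  have key : ∀ m, ∀ hm : m < N, v ⟨m, hm⟩ = 0 := by
    intro m
    induction m using Nat.strong_induction_on with
    | _ m ih =>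
      intro hm
      match m, hm with
      | 0, hm => exact h0 hm
      | (k+1), hm =>
        have hk : k < N := by omega
        have hrow := congrFun hv ⟨k, hk⟩
        have hzero : ∀ j : Fin N, (j : ℕ) ≤ k → v j = 0 := by
          intro j hj
          have := ih j (by omega) j.isLt
          simpa using this
        have hsum : (triC N B J).mulVec v ⟨k, hk⟩ = (J k : ℂ) * v ⟨k+1, hm⟩ := by
          unfold Matrix.mulVec dotProduct
          rw [Finset.sum_eq_single (⟨k+1, hm⟩ : Fin N)]
          · simp [triC]
          · intro j _ hj
            have hj' : (j : ℕ) ≠ k + 1 := fun h => hj (Fin.ext h)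
            rcases lt_or_ge (j : ℕ) (k+1) with hlt | hge
            · rw [hzero j (by omega), mul_zero]
            · have e1 : ¬ ((⟨k, hk⟩ : Fin N) : ℕ) = j := by simp; omega
              have e2 : ¬ ((⟨k, hk⟩ : Fin N) : ℕ) + 1 = j := by simp; omega
              have e3 : ¬ (j : ℕ) + 1 = ((⟨k, hk⟩ : Fin N) : ℕ) := by simp; omega
              simp only [triC, Matrix.of_apply]
              rw [if_neg e1, if_neg e2, if_neg e3, zero_mul]
          · intro h; exact absurd (Finset.mem_univ _) h
        rw [hsum] at hrow
        have hrhs : (μ • v) ⟨k, hk⟩ = 0 := by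
          simp [hzero ⟨k, hk⟩ (le_refl k)]
        rw [hrhs] at hrow
        have hJk : (J k : ℂ) ≠ 0 := Complex.ofReal_ne_zero.mpr (hJ k hm)
        exact (mul_eq_zero.mp hrow).resolve_left hJk
  funext i
  simpa using key i i.isLt

lemma eig_scalar {N : ℕ} (hN : 0 < N) (B J : ℕ → ℝ) (hJ : ∀ i, i + 1 < N → J i ≠ 0)
    (μ : ℂ) (v w : Fin N → ℂ) (hv : (triC N B J).mulVec v = μ • v)
    (hw : (triC N B J).mulVec w = μ • w) (hv0 : v ≠ 0) :
    ∃ c : ℂ, w = c • v := by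
  have hv0' : v ⟨0, hN⟩ ≠ 0 := by
    intro h
    exact hv0 (eig_zero B J hJ μ v hv (fun _ => h))
  refine ⟨w ⟨0, hN⟩ / v ⟨0, hN⟩, ?_⟩
  set c := w ⟨0, hN⟩ / v ⟨0, hN⟩ with hc
  have hu : (triC N B J).mulVec (w - c • v) = μ • (w - c • v) := by
    rw [Matrix.mulVec_sub, Matrix.mulVec_smul, hv, hw, smul_sub, smul_comm]
  have h0 : ∀ h : 0 < N, (w - c • v) ⟨0, h⟩ = 0 := by
    intro h
    simp only [Pi.sub_apply, Pi.smul_apply, smul_eq_mul, hc]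
    field_simp
    ring
  exact sub_eq_zero.mp (eig_zero B J hJ μ (w - c • v) hu h0)

lemma exp_mulVec_eigen {n : Type*} [Fintype n] [DecidableEq n] (M : Matrix n n ℂ)
    (μ : ℂ) (v : n → ℂ) (h : M.mulVec v = μ • v) :
    (NormedSpace.exp M).mulVec v = Complex.exp μ • v := by
  letI : SeminormedRing (Matrix n n ℂ) := Matrix.linftyOpSemiNormedRing
  letI : NormedRing (Matrix n n ℂ) := Matrix.linftyOpNormedRing
  letI : NormedAlgebra ℂ (Matrix n n ℂ) := Matrix.linftyOpNormedAlgebra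
  have hpow : ∀ k : ℕ, (M ^ k).mulVec v = (μ ^ k) • v := by
    intro k
    induction k with
    | zero => simp
    | succ k ih =>
      rw [pow_succ, ← Matrix.mulVec_mulVec, h, Matrix.mulVec_smul, ih, smul_smul,
        pow_succ, mul_comm]
  let L : Matrix n n ℂ →ₗ[ℂ] (n → ℂ) :=
    { toFun := fun A => A.mulVec v
      map_add' := fun A B => Matrix.add_mulVec A B v
      map_smul' := fun c A => Matrix.smul_mulVec c A v }
  have hs : Summable (fun k : ℕ => ((k.factorial : ℂ))⁻¹ • M ^ k) :=
    NormedSpace.expSeries_summable' M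
  have hmap : (NormedSpace.exp M).mulVec v
      = ∑' k : ℕ, ((k.factorial : ℂ))⁻¹ • ((M ^ k).mulVec v) := by
    rw [NormedSpace.exp_eq_tsum ℂ]
    exact ((LinearMap.toContinuousLinearMap L).map_tsum hs).trans (by simp [L])
  rw [hmap]
  have hμs : Summable (fun k : ℕ => ((k.factorial : ℂ))⁻¹ • μ ^ k) :=
    NormedSpace.expSeries_summable' μ
  calc ∑' k : ℕ, ((k.factorial : ℂ))⁻¹ • ((M ^ k).mulVec v)
      = ∑' k : ℕ, (((k.factorial : ℂ))⁻¹ • μ ^ k) • v := by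
        refine tsum_congr fun k => ?_
        rw [hpow k, smul_smul, smul_eq_mul]
    _ = (∑' k : ℕ, ((k.factorial : ℂ))⁻¹ • μ ^ k) • v := by
        exact hμs.tsum_smul_const v
    _ = Complex.exp μ • v := by
        rw [Complex.exp_eq_exp_ℂ, NormedSpace.exp_eq_tsum ℂ]

/-- Symmetry matching condition: if `H` is a real symmetric tridiagonal matrix with
nonzero off-diagonal entries, commuting with the mirror permutation `S`, and there exist
`t₀` and `φ` such that every eigenvalue `μ` with a symmetric eigenvector satisfies
`e^{-i t₀ μ} = e^{iφ}` and every eigenvalue with an antisymmetric eigenvector satisfies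
`e^{-i t₀ μ} = -e^{iφ}`, then perfect state transfer occurs:
`exp (-i t₀ H) e₁ = e^{iφ} e_N`. -/
theorem perfect_state_transfer_of_symmetry_matching
    (N : ℕ) (hN : 0 < N) (B J : ℕ → ℝ) (t₀ φ : ℝ)
    (hJ : ∀ i, i + 1 < N → J i ≠ 0)
    (hcomm : mirrorC N * triC N B J = triC N B J * mirrorC N)
    (hsym : ∀ (μ : ℂ) (v : Fin N → ℂ), v ≠ 0 → (triC N B J).mulVec v = μ • v →
      (mirrorC N).mulVec v = v → Complex.exp (-(Complex.I * t₀) * μ) = Complex.exp (Complex.I * φ))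
    (hasym : ∀ (μ : ℂ) (v : Fin N → ℂ), v ≠ 0 → (triC N B J).mulVec v = μ • v →
      (mirrorC N).mulVec v = -v →
      Complex.exp (-(Complex.I * t₀) * μ) = -Complex.exp (Complex.I * φ)) :
    (NormedSpace.exp ((-(Complex.I * t₀)) • triC N B J)).mulVec
        (Pi.single (⟨0, hN⟩ : Fin N) (1 : ℂ)) =
      Complex.exp (Complex.I * φ) •
        (Pi.single (⟨N - 1, by omega⟩ : Fin N) (1 : ℂ) : Fin N → ℂ) := by
  have hherm : (triC N B J).IsHermitian := tri_herm B J
  set H := triC N B J with hHdef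
  set S := mirrorC N with hSdef
  set a : ℂ := -(Complex.I * ↑t₀) with hadef
  set e : ℂ := Complex.exp (Complex.I * ↑φ) with hedef
  have key : ∀ j : Fin N,
      (NormedSpace.exp (a • H)).mulVecLin ⇑(hherm.eigenvectorBasis j)
        = (e • S).mulVecLin ⇑(hherm.eigenvectorBasis j) := by
    intro j
    set v : Fin N → ℂ := ⇑(hherm.eigenvectorBasis j) with hvdef
    set μ : ℂ := ((hherm.eigenvalues j : ℝ) : ℂ) with hμdef
    have hv : H.mulVec v = μ • v := by
      have h1 := hherm.mulVec_eigenvectorBasis j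
      funext i
      have := congrFun h1 i
      simpa [hμdef, Complex.real_smul] using this
    have hvne : v ≠ 0 := by
      intro h
      exact hherm.eigenvectorBasis.orthonormal.ne_zero j
        (by ext i; exact congrFun h i)
    have hSv : H.mulVec (S.mulVec v) = μ • (S.mulVec v) := by
      rw [Matrix.mulVec_mulVec, ← hcomm, ← Matrix.mulVec_mulVec, hv, Matrix.mulVec_smul]
    obtain ⟨c, hc⟩ := eig_scalar hN B J hJ μ v (S.mulVec v) hv hSv hvne
    have hSS : S.mulVec (S.mulVec v) = v := by
      funext i
      rw [hSdef, mirror_mulVec, mirror_mulVec, Fin.rev_rev]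
    have hc2 : c * c = 1 := by
      have h1 : v = (c * c) • v := by
        conv_lhs => rw [← hSS, hc, Matrix.mulVec_smul, hc, smul_smul]
      obtain ⟨i, hi⟩ : ∃ i, v i ≠ 0 := by
        by_contra h; push_neg at h; exact hvne (funext h)
      have h2 := congrFun h1 i
      simp only [Pi.smul_apply, smul_eq_mul] at h2
      have h3 : c * c * v i = 1 * v i := by rw [one_mul, ← h2]
      exact mul_right_cancel₀ hi h3
    have hexp : (NormedSpace.exp (a • H)).mulVec v = Complex.exp (a * μ) • v := by
      apply exp_mulVec_eigen
      rw [Matrix.smul_mulVec, hv, smul_smul]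
    rcases mul_self_eq_one_iff.mp hc2 with h1 | h1
    · subst h1
      rw [one_smul] at hc
      have hval := hsym μ v hvne hv hc
      rw [Matrix.mulVecLin_apply, Matrix.mulVecLin_apply, hexp,
        Matrix.smul_mulVec, hc, hval]
    · subst h1
      have hc' : S.mulVec v = -v := by rw [hc, neg_one_smul]
      have hval := hasym μ v hvne hv hc'
      rw [Matrix.mulVecLin_apply, Matrix.mulVecLin_apply, hexp,
        Matrix.smul_mulVec, hc', hval, neg_smul, smul_neg]
  let bC : Module.Basis (Fin N) ℂ (Fin N → ℂ) :=
    hherm.eigenvectorBasis.toBasis.map (WithLp.linearEquiv 2 ℂ (Fin N → ℂ))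
  have hbC : ∀ j, bC j = ⇑(hherm.eigenvectorBasis j) := by
    intro j
    simp [bC]
  have hmat : (NormedSpace.exp (a • H)).mulVecLin = (e • S).mulVecLin :=
    bC.ext fun j => by rw [hbC]; exact key j
  have hev := LinearMap.congr_fun hmat (Pi.single (⟨0, hN⟩ : Fin N) (1 : ℂ))
  rw [Matrix.mulVecLin_apply, Matrix.mulVecLin_apply] at hev
  rw [hev, Matrix.smul_mulVec]
  congr 1
  funext i
  rw [hSdef, mirror_mulVec]
  have hiff : (i.rev = (⟨0, hN⟩ : Fin N)) ↔ (i = (⟨N - 1, by omega⟩ : Fin N)) := by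
    rw [Fin.ext_iff, Fin.ext_iff, Fin.val_rev]
    simp
    omega
  simp [Pi.single_apply, hiff]
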